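/- Let X be a metric space of bounded geometry. Then X has Property A if and only if X is large scale paracompact. -/

import Mathlib

open Function Metric ENNReal

noncomputable section

/-- `ℓ¹(S)`: real-valued functions on `S` with finite `ℓ¹`-norm, with the `ℓ¹` metric. -/
abbrev ellOne (S : Type u) : Type u := lp (fun _ : S => ℝ) 1

/-- The full simplex `Δ(S) ⊆ ℓ¹(S)`. -/
def fullSimplex (S : Type u) : Set (ellOne S) :=
  {p | (∀ s, 0 ≤ p s) ∧ (support (p : S → ℝ)).Finite ∧ ∑' s, p s = 1}

/-- The `n`-skeleton `Δ(S)^(n)` of the full simplex. -/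
def skeleton (S : Type u) (n : ℕ) : Set (ellOne S) :=
  {p ∈ fullSimplex S | (support (p : S → ℝ)).encard ≤ n + 1}

/-- A simplicial complex on `S`: a subset of `Δ(S)` closed under passing to
points whose support is contained in the support of a member. -/
def IsSimplicialComplex {S : Type u} (K : Set (ellOne S)) : Prop :=
  K ⊆ fullSimplex S ∧
    ∀ p ∈ K, ∀ q ∈ fullSimplex S,
      support (q : S → ℝ) ⊆ support (p : S → ℝ) → q ∈ K

/-- The star of a vertex `v` in `K`. -/
def star {S : Type u} (K : Set (ellOne S)) (v : S) : Set (ellOne S) :=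
  {p ∈ K | 0 < p v}

/-- `f` is `(λ, C)`-Lipschitz. -/
def IsLipschitzLC {X Y : Type*} [MetricSpace X] [MetricSpace Y]
    (l C : ℝ) (f : X → Y) : Prop :=
  ∀ x y, dist (f x) (f y) ≤ l * dist x y + C

/-- A family of sets is uniformly bounded. -/
def UniformlyBounded {X : Type*} [MetricSpace X] {ι : Type*} (U : ι → Set X) : Prop :=
  ∃ M : ℝ, ∀ i, ∀ x ∈ U i, ∀ y ∈ U i, dist x y ≤ M

/-- `U` is a cover of the whole space. -/
def IsCover {X : Type*} {ι : Type*} (U : ι → Set X) : Prop := ∀ x, ∃ i, x ∈ U i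

/-- The Lebesgue number `inf_x sup_i dist(x, X∖Uᵢ)` of a family, as a value in `ℝ≥0∞`. -/
def lebesgue {X : Type*} [MetricSpace X] {ι : Type*} (U : ι → Set X) : ℝ≥0∞ :=
  ⨅ x : X, ⨆ i, EMetric.infEdist x (U i)ᶜ

/-- The multiplicity of `U` is at most `m`. -/
def MultiplicityLE {X : Type*} [MetricSpace X] {ι : Type*} (U : ι → Set X) (m : ℕ) : Prop :=
  ∀ x : X, {i | 0 < Metric.infDist x ((U i)ᶜ)}.encard ≤ m

/-- `f : X → K` is a `δ`-partition of unity. -/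
def IsDeltaPartitionOfUnity {X : Type*} [MetricSpace X] {S : Type u}
    (δ : ℝ) (K : Set (ellOne S)) (f : X → ellOne S) : Prop :=
  (∀ x, f x ∈ K) ∧ IsLipschitzLC δ δ f ∧
    UniformlyBounded (fun v : S => f ⁻¹' star K v) ∧
    ENNReal.ofReal (1 / δ) ≤ lebesgue (fun v : S => f ⁻¹' star K v)

/-- `X` is large scale paracompact. -/
def LSParacompact (X : Type u) [MetricSpace X] : Prop :=
  ∀ (ι : Type u) (U : ι → Set X), IsCover U → UniformlyBounded U →
    ∀ l C : ℝ, 0 < l → 0 < C →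
      ∃ (S : Type u) (K : Set (ellOne S)) (f : X → ellOne S),
        IsSimplicialComplex K ∧ (∀ x, f x ∈ K) ∧ IsLipschitzLC l C f ∧
        UniformlyBounded (fun v : S => f ⁻¹' star K v) ∧
        ∀ i, ∃ v : S, U i ⊆ f ⁻¹' star K v

/-- `X` has asymptotic dimension at most `n`. -/
def AsdimLE (X : Type u) [MetricSpace X] (n : ℕ) : Prop :=
  ∀ R : ℝ, 0 < R → ∃ (ι : Type u) (U : ι → Set X),
    IsCover U ∧ UniformlyBounded U ∧ MultiplicityLE U (n + 1) ∧
    ENNReal.ofReal R ≤ lebesgue U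

/-- `X` has Property A. -/
def PropertyA (X : Type u) [MetricSpace X] : Prop :=
  ∀ R ε : ℝ, 0 < R → 0 < ε →
    ∃ (M : ℝ) (S : Type u) (φ : S → X → ℝ), 0 < M ∧
      (∀ s x, 0 ≤ φ s x ∧ φ s x ≤ 1) ∧
      (∀ x, (support fun s => φ s x).Finite) ∧
      (∀ x, ∑' s, φ s x = 1) ∧
      (∀ x y, dist x y ≤ R → ∑' s, |φ s x - φ s y| < ε) ∧
      (∀ s, ∀ x ∈ support (φ s), ∀ y ∈ support (φ s), dist x y ≤ M)

/-- `f` has `(R, ε)` variation. -/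
def HasVariation {X Y : Type*} [MetricSpace X] [MetricSpace Y] (R ε : ℝ) (f : X → Y) : Prop :=
  ∀ x y, dist x y ≤ R → dist (f x) (f y) < ε

/-- `g` is a coarse embedding. -/
def CoarseEmbedding {X Y : Type*} [MetricSpace X] [MetricSpace Y] (g : X → Y) : Prop :=
  ∃ ρminus ρplus : ℝ → ℝ, Monotone ρminus ∧ Monotone ρplus ∧
    Filter.Tendsto ρminus Filter.atTop Filter.atTop ∧
    ∀ x y, ρminus (dist x y) ≤ dist (g x) (g y) ∧ dist (g x) (g y) ≤ ρplus (dist x y)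

/-- `X` has bounded geometry: balls of any fixed radius have uniformly bounded cardinality. -/
def BoundedGeometry (X : Type*) [MetricSpace X] : Prop :=
  ∀ r : ℝ, 0 < r → ∃ N : ℕ, ∀ x : X, (Metric.ball x r).encard ≤ N

namespace PAaux

lemma memℓp_one_of_finite {S : Type*} (f : S → ℝ) (hf : (support f).Finite) : Memℓp f 1 := by
  apply memℓp_gen
  simpa using (summable_of_finite_support (hf.subset (by
    intro s hs
    simp only [mem_support] at hs ⊢
    simpa using hs)) : Summable fun i => ‖f i‖)

/-- Build an element of `ℓ¹(S)` from a finitely supported function. -/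
def mk1 {S : Type*} (f : S → ℝ) (hf : (support f).Finite) : lp (fun _ : S => ℝ) 1 :=
  ⟨f, memℓp_one_of_finite f hf⟩

@[simp] lemma mk1_apply {S : Type*} (f : S → ℝ) (hf : (support f).Finite) (s : S) :
    (mk1 f hf : S → ℝ) s = f s := rfl

lemma dist_eq {S : Type*} (p q : lp (fun _ : S => ℝ) 1) : dist p q = ∑' s, |p s - q s| := by
  rw [dist_eq_norm, lp.norm_eq_tsum_rpow (by norm_num)]
  simp [Real.norm_eq_abs]

lemma tsum_sum_elim {α β : Type*} (f : α → ℝ) (g : β → ℝ) (hf : (support f).Finite)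
    (hg : (support g).Finite) :
    ∑' v : α ⊕ β, Sum.elim f g v = ∑' a, f a + ∑' b, g b := by
  classical
  rw [tsum_eq_sum (s := hf.toFinset.disjSum hg.toFinset) ?_, Finset.sum_disjSum,
    tsum_eq_sum (s := hf.toFinset) ?_, tsum_eq_sum (s := hg.toFinset) ?_]
  · simp
  · intro b hb; simpa using hb
  · intro a ha; simpa using ha
  · intro v hv
    cases v with
    | inl a => rw [Finset.inl_mem_disjSum] at hv; simpa using hv
    | inr b => rw [Finset.inr_mem_disjSum] at hv; simpa using hv

lemma support_abs_sub {γ : Type*} (u v : γ → ℝ) :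
    (support fun i => |u i - v i|) ⊆ support u ∪ support v := by
  intro i hi
  rw [mem_support] at hi
  by_contra hns
  simp only [Set.mem_union, mem_support, not_or, not_not] at hns
  exact hi (by rw [hns.1, hns.2]; simp)

lemma support_const_mul {γ : Type*} (c : ℝ) (w : γ → ℝ) :
    (support fun i => c * w i) ⊆ support w := by
  intro i hi
  rw [mem_support] at hi ⊢
  intro h0
  exact hi (by rw [h0, mul_zero])

lemma lsp_to_pA (X : Type u) [MetricSpace X] (hLSP : LSParacompact X) : PropertyA X := by
  intro R ε hR hε
  obtain ⟨S, K, f, hK, hfK, hlip, ⟨M, hM⟩, -⟩ :=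
    hLSP X (fun x => {x}) (fun x => ⟨x, rfl⟩)
      ⟨0, by
        intro i x hx y hy
        rw [Set.mem_singleton_iff] at hx hy
        simp [hx, hy]⟩
      (ε / (2 * (R + 1))) (ε / 4) (by positivity) (by positivity)
  have hmem : ∀ x, f x ∈ fullSimplex S := fun x => hK.1 (hfK x)
  refine ⟨max M 1, S, fun s x => f x s, lt_of_lt_of_le one_pos (le_max_right M 1),
    ?_, fun x => (hmem x).2.1, fun x => (hmem x).2.2, ?_, ?_⟩
  · intro s x
    refine ⟨(hmem x).1 s, ?_⟩
    have hsum : Summable (fun t => f x t) := summable_of_finite_support (hmem x).2.1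
    have h1 := Summable.le_tsum hsum s (fun t _ => (hmem x).1 t)
    rw [(hmem x).2.2] at h1
    exact h1
  · intro x y hxy
    have h1 : (∑' s, |f x s - f y s|) = dist (f x) (f y) := (dist_eq (f x) (f y)).symm
    rw [h1]
    have h2 := hlip x y
    have h3 : ε / (2 * (R + 1)) * dist x y ≤ ε / (2 * (R + 1)) * R :=
      mul_le_mul_of_nonneg_left hxy (by positivity)
    have h4 : ε / (2 * (R + 1)) * R < ε / 2 := by
      rw [div_mul_eq_mul_div, div_lt_div_iff₀ (by positivity) (by norm_num)]
      nlinarith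
    linarith
  · intro s x hx y hy
    rw [mem_support] at hx hy
    have hxs : f x ∈ star K s := ⟨hfK x, lt_of_le_of_ne ((hmem x).1 s) (Ne.symm hx)⟩
    have hys : f y ∈ star K s := ⟨hfK y, lt_of_le_of_ne ((hmem y).1 s) (Ne.symm hy)⟩
    exact (hM s x hxs y hys).trans (le_max_left M 1)

section Part2

variable {X : Type u} {ι : Type u} [MetricSpace X]

open Classical in
/-- Bump function associated to a set `A` belonging to the family `U`. -/
def bump (U : ι → Set X) (A : Set X) (x : X) : ℝ :=
  if A.Nonempty ∧ A ∈ Set.range U then max 0 (1 - Metric.infDist x A) else 0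

lemma bump_nonneg (U : ι → Set X) (A : Set X) (x : X) : 0 ≤ bump U A x := by
  rw [bump]
  split_ifs
  · exact le_max_left _ _
  · exact le_refl 0

lemma bump_near (U : ι → Set X) (A : Set X) (x : X) (hne : bump U A x ≠ 0) :
    (∃ i, U i = A) ∧ ∃ a ∈ A, dist x a < 1 := by
  rw [bump] at hne
  split_ifs at hne with hc
  · obtain ⟨hAne, hAr⟩ := hc
    have hd : Metric.infDist x A < 1 := by
      by_contra hge
      push_neg at hge
      exact hne (max_eq_left (by linarith))
    obtain ⟨a, ha, hax⟩ := (Metric.infDist_lt_iff hAne).mp hd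
    exact ⟨hAr, a, ha, hax⟩
  · exact absurd rfl hne

lemma bump_self (U : ι → Set X) (i : ι) (x : X) (hx : x ∈ U i) : bump U (U i) x = 1 := by
  rw [bump, if_pos ⟨⟨x, hx⟩, ⟨i, rfl⟩⟩, Metric.infDist_zero_of_mem hx]
  norm_num

lemma bump_support_finite (U : ι → Set X) {B : ℝ}
    (hB : ∀ i, ∀ x ∈ U i, ∀ y ∈ U i, dist x y ≤ B) (x : X)
    (hball : (Metric.ball x (B + 2)).Finite) :
    (support fun A => bump U A x).Finite := by
  apply hball.finite_subsets.subset
  intro A hA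
  rw [mem_support] at hA
  obtain ⟨⟨i, hi⟩, a, haA, hax⟩ := bump_near U A x hA
  intro b hb
  have hdab : dist b a ≤ B := hB i b (hi ▸ hb) a (hi ▸ haA)
  have htri : dist b x ≤ dist b a + dist a x := dist_triangle b a x
  rw [dist_comm a x] at htri
  simp only [Metric.mem_ball]
  linarith

end Part2

end PAaux

open PAaux in
lemma pA_to_lsp (X : Type u) [MetricSpace X] (hX : BoundedGeometry X) (hA : PropertyA X) :
    LSParacompact X := by
  classical
  intro ι U hcover hubd l C hl hC
  obtain ⟨B₀, hB₀⟩ := hubd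
  set B : ℝ := max B₀ 0 with hBdef
  have hB : ∀ i, ∀ x ∈ U i, ∀ y ∈ U i, dist x y ≤ B :=
    fun i x hx y hy => (hB₀ i x hx y hy).trans (le_max_left _ _)
  have hBnn : (0:ℝ) ≤ B := le_max_right _ _
  obtain ⟨N, hN⟩ := hX (B + 2) (by linarith)
  have hball : ∀ x : X, (Metric.ball x (B + 2)).Finite := fun x =>
    Set.encard_lt_top_iff.mp (lt_of_le_of_lt (hN x) (WithTop.coe_lt_top N))
  set t : ℝ := min (C / 4) (1 / 2) with htdef
  have ht0 : 0 < t := lt_min (by positivity) (by norm_num)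
  have ht2 : t ≤ 1 / 2 := min_le_right _ _
  have htC : t ≤ C / 4 := min_le_left _ _
  have h1t : (0:ℝ) ≤ 1 - t := by linarith
  obtain ⟨M, S, φ, hM, hφ01, hφfin, hφsum, hφvar, hφsupp⟩ :=
    hA (2 / l) (C / 2) (by positivity) (by positivity)
  -- summability facts for the bump system
  have hsuppA : ∀ x : X, (support fun A => bump U A x).Finite :=
    fun x => bump_support_finite U hB x (hball x)
  have hhsummable : ∀ x : X, Summable fun A => bump U A x :=
    fun x => summable_of_finite_support (hsuppA x)
  set H : X → ℝ := fun x => ∑' A, bump U A x with hHdef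
  have hH1 : ∀ x, 1 ≤ H x := by
    intro x
    obtain ⟨i, hi⟩ := hcover x
    calc (1:ℝ) = bump U (U i) x := (bump_self U i x hi).symm
      _ ≤ H x := Summable.le_tsum (hhsummable x) (U i) (fun b _ => bump_nonneg U b x)
  have hH0 : ∀ x, 0 < H x := fun x => lt_of_lt_of_le one_pos (hH1 x)
  set χ : Set X → X → ℝ := fun A x => bump U A x / H x with hχdef
  have hχ0 : ∀ (A : Set X) x, 0 ≤ χ A x := fun A x => div_nonneg (bump_nonneg U A x) (hH0 x).le
  have hχsupp : ∀ x, (support fun A => χ A x).Finite := by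
    intro x
    apply (hsuppA x).subset
    intro A hA
    rw [mem_support] at hA ⊢
    intro h0
    exact hA (by simp only [hχdef] at *; rw [h0, zero_div])
  have hχsummable : ∀ x, Summable fun A => χ A x :=
    fun x => summable_of_finite_support (hχsupp x)
  have hχsum : ∀ x, ∑' A, χ A x = 1 := by
    intro x
    simp only [hχdef]
    rw [tsum_div_const]
    exact div_self (hH0 x).ne'
  have hφsummable : ∀ x, Summable fun s => φ s x :=
    fun x => summable_of_finite_support (hφfin x)
  -- the map g
  have hfin1 : ∀ x, (support fun s => (1 - t) * φ s x).Finite :=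
    fun x => (hφfin x).subset (support_const_mul _ _)
  have hfin2 : ∀ x, (support fun A => t * χ A x).Finite :=
    fun x => (hχsupp x).subset (support_const_mul _ _)
  have hgfin : ∀ x, (support (Sum.elim (fun s => (1 - t) * φ s x)
      (fun A => t * χ A x))).Finite := by
    intro x
    apply (((hfin1 x).image Sum.inl).union ((hfin2 x).image Sum.inr)).subset
    intro v hv
    rcases v with s | A
    · exact Or.inl ⟨s, hv, rfl⟩
    · exact Or.inr ⟨A, hv, rfl⟩
  set g : X → ellOne (S ⊕ Set X) :=
    fun x => mk1 (Sum.elim (fun s => (1 - t) * φ s x) (fun A => t * χ A x)) (hgfin x) with hgdef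
  have hgmem : ∀ x, g x ∈ fullSimplex (S ⊕ Set X) := by
    intro x
    refine ⟨?_, hgfin x, ?_⟩
    · rintro (s | A)
      · exact mul_nonneg h1t (hφ01 s x).1
      · exact mul_nonneg ht0.le (hχ0 A x)
    · show (∑' v : S ⊕ Set X,
        Sum.elim (fun s => (1 - t) * φ s x) (fun A => t * χ A x) v) = 1
      rw [tsum_sum_elim _ _ (hfin1 x) (hfin2 x), tsum_mul_left, tsum_mul_left,
        hφsum x, hχsum x]
      ring
  have hgdist : ∀ x y, dist (g x) (g y) =
      (1 - t) * (∑' s, |φ s x - φ s y|) + t * (∑' A, |χ A x - χ A y|) := by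
    intro x y
    rw [PAaux.dist_eq]
    have he : (fun v : S ⊕ Set X => |g x v - g y v|) =
        Sum.elim (fun s => (1 - t) * |φ s x - φ s y|) (fun A => t * |χ A x - χ A y|) := by
      funext v
      rcases v with s | A
      · show |(1 - t) * φ s x - (1 - t) * φ s y| = _
        rw [← mul_sub, abs_mul, abs_of_nonneg h1t]; rfl
      · show |t * χ A x - t * χ A y| = _
        rw [← mul_sub, abs_mul, abs_of_nonneg ht0.le]; rfl
    rw [he, tsum_sum_elim _ _
        (((hφfin x).union (hφfin y)).subset
          ((support_const_mul _ _).trans (support_abs_sub _ _)))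
        (((hχsupp x).union (hχsupp y)).subset
          ((support_const_mul _ _).trans (support_abs_sub _ _))),
      tsum_mul_left, tsum_mul_left]
  have habs : ∀ {γ : Type u} (u v : γ → ℝ), (∀ i, 0 ≤ u i) → (∀ i, 0 ≤ v i) →
      Summable u → Summable v → ∑' i, u i = 1 → ∑' i, v i = 1 →
      (∑' i, |u i - v i|) ≤ 2 := by
    intro γ u v hu hv hsu hsv h1 h2
    calc (∑' i, |u i - v i|) ≤ ∑' i, (u i + v i) := by
          apply Summable.tsum_le_tsum _ _ (hsu.add hsv)
          · intro i
            refine (abs_sub _ _).trans ?_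
            rw [abs_of_nonneg (hu i), abs_of_nonneg (hv i)]
          · apply hsu.abs.add hsv.abs |>.of_nonneg_of_le (fun i => abs_nonneg _)
              (fun i => (abs_sub _ _))
      _ = 2 := by rw [Summable.tsum_add hsu hsv, h1, h2]; norm_num
  have hDφ : ∀ x y, (∑' s, |φ s x - φ s y|) ≤ 2 := fun x y =>
    habs _ _ (fun s => (hφ01 s x).1) (fun s => (hφ01 s y).1)
      (hφsummable x) (hφsummable y) (hφsum x) (hφsum y)
  have hDχ : ∀ x y, (∑' A, |χ A x - χ A y|) ≤ 2 := fun x y =>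
    habs _ _ (fun A => hχ0 A x) (fun A => hχ0 A y)
      (hχsummable x) (hχsummable y) (hχsum x) (hχsum y)
  refine ⟨S ⊕ Set X, fullSimplex (S ⊕ Set X), g,
    ⟨Set.Subset.rfl, fun p _ q hq _ => hq⟩, hgmem, ?_, ?_, ?_⟩
  · -- Lipschitz
    intro x y
    rw [hgdist x y]
    have hd0 : 0 ≤ ∑' s, |φ s x - φ s y| := tsum_nonneg (fun s => abs_nonneg _)
    have hdχ0 : 0 ≤ ∑' A, |χ A x - χ A y| := tsum_nonneg (fun A => abs_nonneg _)
    rcases le_or_gt (dist x y) (2 / l) with hle | hgt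
    · have hv := hφvar x y hle
      have hl0 : 0 ≤ l * dist x y := mul_nonneg hl.le dist_nonneg
      nlinarith [hDχ x y, ht0.le]
    · have h2 : 2 < l * dist x y := by
        rw [div_lt_iff₀ hl] at hgt
        linarith [hgt]
      nlinarith [hDφ x y, hDχ x y, ht0.le, hC]
  · -- uniformly bounded stars
    refine ⟨max M (B + 2), ?_⟩
    rintro (s | A) x hx y hy
    · have hxp : 0 < (1 - t) * φ s x := hx.2
      have hyp : 0 < (1 - t) * φ s y := hy.2
      have hxφ : x ∈ support (φ s) := by
        rw [mem_support]; intro h0; rw [h0, mul_zero] at hxp; exact lt_irrefl 0 hxp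
      have hyφ : y ∈ support (φ s) := by
        rw [mem_support]; intro h0; rw [h0, mul_zero] at hyp; exact lt_irrefl 0 hyp
      exact (hφsupp s x hxφ y hyφ).trans (le_max_left _ _)
    · have hxp : 0 < t * χ A x := hx.2
      have hyp : 0 < t * χ A y := hy.2
      have hxh : bump U A x ≠ 0 := by
        intro h0
        have : χ A x = 0 := by simp only [hχdef]; rw [h0, zero_div]
        rw [this, mul_zero] at hxp; exact lt_irrefl 0 hxp
      have hyh : bump U A y ≠ 0 := by
        intro h0
        have : χ A y = 0 := by simp only [hχdef]; rw [h0, zero_div]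
        rw [this, mul_zero] at hyp; exact lt_irrefl 0 hyp
      obtain ⟨⟨i, hi⟩, a, haA, hax⟩ := bump_near U A x hxh
      obtain ⟨-, b, hbA, hby⟩ := bump_near U A y hyh
      have hab : dist a b ≤ B := hB i a (hi ▸ haA) b (hi ▸ hbA)
      have htri := dist_triangle4 x a b y
      rw [dist_comm b y] at htri
      have : dist x y ≤ B + 2 := by linarith
      exact this.trans (le_max_right _ _)
  · -- the cover is subordinated
    intro i
    by_cases hne : (U i).Nonempty
    · refine ⟨Sum.inr (U i), fun x hx => ?_⟩
      refine ⟨hgmem x, ?_⟩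
      show 0 < t * χ (U i) x
      have hone : bump U (U i) x = 1 := bump_self U i x hx
      have : χ (U i) x = 1 / H x := by simp only [hχdef]; rw [hone]
      rw [this]
      exact mul_pos ht0 (div_pos one_pos (hH0 x))
    · refine ⟨Sum.inr ∅, ?_⟩
      rw [Set.not_nonempty_iff_eq_empty] at hne
      rw [hne]
      exact Set.empty_subset _

/-- for a metric space of bounded geometry, Property A is equivalent to
large scale paracompactness. -/
theorem propertyA_iff_lsParacompact (X : Type u) [MetricSpace X]
    (hX : BoundedGeometry X) : PropertyA X ↔ LSParacompact X :=
  ⟨fun h => pA_to_lsp X hX h, fun h => PAaux.lsp_to_pA X h⟩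

end
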